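/- For all real x > 0 and y > 0, there exists a unique ρ with 0 < ρ < 1 such that (1 + x/ρ)^ρ = 1 + x/(1 + y). -/

import Mathlib

open Real Set Filter Topology

private lemma g_hasDerivAt (x : ℝ) (hx : 0 < x) {ρ : ℝ} (hρ : 0 < ρ) :
    HasDerivAt (fun t : ℝ => t * Real.log (1 + x / t))
      (Real.log (1 + x / ρ) + ρ * ((x * -(ρ ^ 2)⁻¹) / (1 + x / ρ))) ρ := by
  have hbase : 0 < 1 + x / ρ := by positivity
  have h1 : HasDerivAt (fun t : ℝ => 1 + x / t) (x * -(ρ ^ 2)⁻¹) ρ := by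
    simpa [div_eq_mul_inv] using ((hasDerivAt_inv hρ.ne').const_mul x).const_add 1
  have h2 : HasDerivAt (fun t : ℝ => Real.log (1 + x / t))
      ((x * -(ρ ^ 2)⁻¹) / (1 + x / ρ)) ρ := h1.log hbase.ne'
  simpa [one_mul, Pi.mul_def] using (hasDerivAt_id ρ).mul h2

private lemma g_strictMono (x : ℝ) (hx : 0 < x) :
    StrictMonoOn (fun t : ℝ => t * Real.log (1 + x / t)) (Set.Ioi 0) := by
  apply strictMonoOn_of_deriv_pos (convex_Ioi 0)
  · apply ContinuousOn.mul continuousOn_id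
    apply ContinuousOn.log
    · exact continuousOn_const.add (continuousOn_const.div continuousOn_id
        (fun t ht => ne_of_gt ht))
    · intro t ht
      have ht' : (0:ℝ) < t := ht
      positivity
  · intro ρ hρ
    rw [interior_Ioi] at hρ
    have hρ' : (0:ℝ) < ρ := hρ
    rw [(g_hasDerivAt x hx hρ').deriv]
    have hbase : 0 < 1 + x / ρ := by positivity
    -- log(1+x/ρ) > (x/ρ)/(1+x/ρ)
    have hlog : (x / ρ) / (1 + x / ρ) < Real.log (1 + x / ρ) := by
      have hv : (0:ℝ) < (1 + x / ρ)⁻¹ := by positivity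
      have hv1 : (1 + x / ρ)⁻¹ ≠ 1 := by
        have : (1:ℝ) < 1 + x / ρ := by
          have : 0 < x / ρ := by positivity
          linarith
        rw [ne_eq, inv_eq_one]
        linarith
      have := Real.log_lt_sub_one_of_pos hv hv1
      rw [Real.log_inv] at this
      have h2 : 1 - (1 + x / ρ)⁻¹ < Real.log (1 + x / ρ) := by linarith
      have h3 : 1 - (1 + x / ρ)⁻¹ = (x / ρ) / (1 + x / ρ) := by
        field_simp
        ring
      linarith [h3 ▸ h2]
    have hterm : ρ * ((x * -(ρ ^ 2)⁻¹) / (1 + x / ρ)) = -((x / ρ) / (1 + x / ρ)) := by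
      field_simp
    rw [hterm]
    linarith

private lemma g_tendsto_zero (x : ℝ) (hx : 0 < x) :
    Tendsto (fun t : ℝ => t * Real.log (1 + x / t)) (𝓝[>] (0:ℝ)) (𝓝 0) := by
  have hb : Tendsto (fun t : ℝ => 2 * Real.sqrt (1 + x) * Real.sqrt t)
      (𝓝[>] (0:ℝ)) (𝓝 0) := by
    have : Continuous (fun t : ℝ => 2 * Real.sqrt (1 + x) * Real.sqrt t) := by
      continuity
    exact tendsto_nhdsWithin_of_tendsto_nhds (this.tendsto' 0 0 (by simp))
  apply squeeze_zero'
  · filter_upwards [self_mem_nhdsWithin] with t ht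
    have ht' : (0:ℝ) < t := ht
    have : (1:ℝ) ≤ 1 + x / t := by
      have : 0 < x / t := by positivity
      linarith
    exact mul_nonneg ht'.le (Real.log_nonneg this)
  · filter_upwards [Ioo_mem_nhdsGT (zero_lt_one)] with t ht
    obtain ⟨ht0, ht1⟩ := ht
    have hbase : (0:ℝ) < 1 + x / t := by positivity
    -- log u ≤ 2 * (√u)  since log u = 2 log √u ≤ 2(√u - 1) ≤ 2√u
    have hlogle : Real.log (1 + x / t) ≤ 2 * Real.sqrt (1 + x / t) := by
      have hs : 0 < Real.sqrt (1 + x / t) := Real.sqrt_pos.mpr hbase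
      have := Real.log_le_sub_one_of_pos hs
      have hlg : Real.log (1 + x / t) = 2 * Real.log (Real.sqrt (1 + x / t)) := by
        rw [Real.log_sqrt hbase.le]; ring
      rw [hlg]; nlinarith
    have hmono : (1 : ℝ) + x / t ≤ (1 + x) / t := by
      rw [add_div]
      have : (1:ℝ) ≤ 1 / t := by
        rw [le_div_iff₀ ht0]; linarith
      linarith
    have hsq : Real.sqrt (1 + x / t) ≤ Real.sqrt (1 + x) / Real.sqrt t := by
      rw [← Real.sqrt_div' _ ]
      · exact Real.sqrt_le_sqrt hmono
      · linarith
    calc t * Real.log (1 + x / t) ≤ t * (2 * Real.sqrt (1 + x / t)) := by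
          exact mul_le_mul_of_nonneg_left hlogle ht0.le
      _ ≤ t * (2 * (Real.sqrt (1 + x) / Real.sqrt t)) := by
          apply mul_le_mul_of_nonneg_left _ ht0.le
          linarith
      _ = 2 * Real.sqrt (1 + x) * (t / Real.sqrt t) := by ring
      _ = 2 * Real.sqrt (1 + x) * Real.sqrt t := by rw [Real.div_sqrt]
  · exact hb

/-- Claim 1: for all `x, y > 0` there is a unique `ρ ∈ (0,1)` with
`(1 + x/ρ)^ρ = 1 + x/(1+y)`. -/
theorem exists_unique_rho (x y : ℝ) (hx : 0 < x) (hy : 0 < y) :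
    ∃! ρ : ℝ, 0 < ρ ∧ ρ < 1 ∧ (1 + x / ρ) ^ ρ = 1 + x / (1 + y) := by
  set g : ℝ → ℝ := fun t => t * Real.log (1 + x / t) with hg
  set c : ℝ := Real.log (1 + x / (1 + y)) with hc
  have hy1 : (0:ℝ) < 1 + y := by linarith
  have hrhs : (0:ℝ) < 1 + x / (1 + y) := by positivity
  have hc0 : 0 < c := by
    apply Real.log_pos
    have : 0 < x / (1 + y) := by positivity
    linarith
  have hcg1 : c < g 1 := by
    have hg1 : g 1 = Real.log (1 + x) := by simp [hg]
    rw [hg1, hc]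
    apply Real.log_lt_log hrhs
    have h1 : x / (1 + y) < x := by
      rw [div_lt_iff₀ hy1]
      nlinarith
    linarith
  -- the equation is equivalent to g ρ = c for ρ > 0
  have key : ∀ ρ : ℝ, 0 < ρ → ((1 + x / ρ) ^ ρ = 1 + x / (1 + y) ↔ g ρ = c) := by
    intro ρ hρ
    have hbase : (0:ℝ) < 1 + x / ρ := by positivity
    constructor
    · intro h
      have := congrArg Real.log h
      rwa [Real.log_rpow hbase] at this
    · intro h
      have : Real.log ((1 + x / ρ) ^ ρ) = c := by
        rw [Real.log_rpow hbase]; exact h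
      have h2 : Real.exp (Real.log ((1 + x / ρ) ^ ρ)) = Real.exp c := by rw [this]
      rwa [Real.exp_log (Real.rpow_pos_of_pos hbase ρ), hc,
        Real.exp_log hrhs] at h2
  -- find ρ0 ∈ (0,1) with g ρ0 < c
  obtain ⟨ρ0, hρ0lt, hρ0mem⟩ :=
    (((g_tendsto_zero x hx).eventually_lt_const hc0).and
      (Filter.eventually_mem_set.mpr (Ioo_mem_nhdsGT zero_lt_one))).exists
  obtain ⟨hρ00, hρ01⟩ := hρ0mem
  -- continuity of g on [ρ0, 1]
  have hcont : ContinuousOn g (Icc ρ0 1) := by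
    apply ContinuousOn.mul continuousOn_id
    apply ContinuousOn.log
    · exact continuousOn_const.add (continuousOn_const.div continuousOn_id
        (fun t ht => ne_of_gt (lt_of_lt_of_le hρ00 ht.1)))
    · intro t ht
      have ht' : (0:ℝ) < t := lt_of_lt_of_le hρ00 ht.1
      positivity
  have hsub : Icc ρ0 1 ⊆ Ioi (0:ℝ) := fun t ht => lt_of_lt_of_le hρ00 ht.1
  obtain ⟨ρ, hρmem, hρeq⟩ := intermediate_value_Icc hρ01.le hcont
    ⟨hρ0lt.le, hcg1.le⟩
  have hρ0' : 0 < ρ := lt_of_lt_of_le hρ00 hρmem.1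
  have hρ1 : ρ < 1 := by
    rcases lt_or_eq_of_le hρmem.2 with h | h
    · exact h
    · exfalso; rw [h] at hρeq; linarith
  refine ⟨ρ, ⟨hρ0', hρ1, (key ρ hρ0').mpr hρeq⟩, ?_⟩
  rintro ρ' ⟨hρ'0, hρ'1, hρ'eq⟩
  have h1 : g ρ' = c := (key ρ' hρ'0).mp hρ'eq
  exact (g_strictMono x hx).injOn hρ'0 hρ0' (h1.trans hρeq.symm)
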